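/- arXiv:1401.4769 — 2 statements merged into one kernel-verified Lean document; each statement's English description precedes it below -/
import Mathlib

section
/- For any real λ₀ and any real λ₁, the integral over ℝ of φ(x)·Φ(λ₀ + λ₁x) dx equals Φ(λ₀/√(1+λ₁²)), where φ and Φ are the standard normal density and cumulative distribution function. -/
open MeasureTheory Real

/-- Standard normal density. -/
noncomputable def stdPhi (x : ℝ) : ℝ := (Real.sqrt (2 * Real.pi))⁻¹ * Real.exp (-(x ^ 2) / 2)

/-- Standard normal CDF. -/
noncomputable def stdPhiCDF (t : ℝ) : ℝ := ∫ u in Set.Iic t, stdPhi u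

set_option maxHeartbeats 1000000

open Set

lemma stdPhi_nonneg (x : ℝ) : 0 ≤ stdPhi x :=
  mul_nonneg (inv_nonneg.2 (Real.sqrt_nonneg _)) (Real.exp_nonneg _)

lemma continuous_stdPhi : Continuous stdPhi := by
  unfold stdPhi; fun_prop

lemma exp_sq_eq : (fun x : ℝ => Real.exp (-(x ^ 2) / 2)) = fun x => Real.exp (-(1/2 : ℝ) * x ^ 2) := by
  funext x; congr 1; ring

lemma integrable_stdPhi : Integrable stdPhi := by
  unfold stdPhi
  refine Integrable.const_mul ?_ _
  rw [exp_sq_eq]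
  exact integrable_exp_neg_mul_sq (by norm_num)

lemma integral_stdPhi : ∫ x, stdPhi x = 1 := by
  unfold stdPhi
  rw [MeasureTheory.integral_const_mul, exp_sq_eq, integral_gaussian]
  rw [show (π / (1/2 : ℝ)) = 2 * π by ring]
  rw [inv_mul_cancel₀]
  positivity

lemma setIntegral_Iic_comp_add (f : ℝ → ℝ) (t a : ℝ) :
    ∫ u in Iic t, f u = ∫ v in Iic (t - a), f (v + a) := by
  rw [← integral_indicator measurableSet_Iic, ← integral_indicator measurableSet_Iic,
    ← integral_add_right_eq_self (fun u => (Iic t).indicator f u) a]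
  congr 1; funext v
  simp only [indicator_apply, mem_Iic]
  by_cases h : v + a ≤ t
  · rw [if_pos h, if_pos (by linarith)]
  · rw [if_neg h, if_neg (by intro hh; exact h (by linarith))]

lemma setIntegral_Iic_comp_div (f : ℝ → ℝ) (t c : ℝ) (hc : 0 < c) :
    ∫ v in Iic t, f (v / c) = c * ∫ w in Iic (t / c), f w := by
  rw [← integral_indicator measurableSet_Iic, ← integral_indicator measurableSet_Iic]
  have h := MeasureTheory.Measure.integral_comp_div
    (fun w => (Iic (t / c)).indicator f w) c
  rw [abs_of_pos hc, smul_eq_mul] at h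
  rw [← h]
  congr 1; funext v
  simp only [indicator_apply, mem_Iic]
  have : v / c ≤ t / c ↔ v ≤ t := by
    constructor
    · intro hh; have := mul_le_mul_of_nonneg_right hh hc.le
      rwa [div_mul_cancel₀ _ hc.ne', div_mul_cancel₀ _ hc.ne'] at this
    · intro hh; exact div_le_div_of_nonneg_right hh hc.le
  by_cases h2 : v ≤ t
  · rw [if_pos h2, if_pos (this.2 h2)]
  · rw [if_neg h2, if_neg (fun hh => h2 (this.1 hh))]

lemma inner_gauss (lam1 v : ℝ) :
    ∫ x, stdPhi x * stdPhi (v + lam1 * x)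
      = (Real.sqrt (1 + lam1 ^ 2))⁻¹ * stdPhi (v / Real.sqrt (1 + lam1 ^ 2)) := by
  set T := 1 + lam1 ^ 2 with hTdef
  have hT0 : 0 < T := by positivity
  set c : ℝ := lam1 * v / T with hcdef
  set A : ℝ := Real.sqrt (2 * π) with hAdef
  have hA0 : 0 < A := Real.sqrt_pos.2 (by positivity)
  have hA : A ^ 2 = 2 * π := Real.sq_sqrt (by positivity)
  set s : ℝ := Real.sqrt T with hsdef
  have hs0 : 0 < s := Real.sqrt_pos.2 hT0
  have hs : s ^ 2 = T := Real.sq_sqrt hT0.le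
  have key : ∀ x, stdPhi x * stdPhi (v + lam1 * x)
      = ((2 * π)⁻¹ * Real.exp (-(v ^ 2) / (2 * T))) * Real.exp (-(T/2) * (x + c) ^ 2) := by
    intro x
    unfold stdPhi
    have e1 : A⁻¹ * Real.exp (-(x ^ 2) / 2) * (A⁻¹ * Real.exp (-((v + lam1 * x) ^ 2) / 2))
        = (A ^ 2)⁻¹ * Real.exp (-(x ^ 2) / 2 + -((v + lam1 * x) ^ 2) / 2) := by
      rw [Real.exp_add]; ring
    have e2 : (2 * π)⁻¹ * Real.exp (-(v ^ 2) / (2 * T)) * Real.exp (-(T/2) * (x + c) ^ 2)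
        = (2 * π)⁻¹ * Real.exp (-(v ^ 2) / (2 * T) + -(T/2) * (x + c) ^ 2) := by
      rw [Real.exp_add]; ring
    rw [e1, e2, hA]
    congr 1
    rw [hcdef, hTdef]
    have h1 : (1 : ℝ) + lam1 ^ 2 ≠ 0 := by positivity
    congr 1
    field_simp
    ring
  simp only [key]
  rw [MeasureTheory.integral_const_mul]
  have htrans : ∫ x, Real.exp (-(T/2) * (x + c) ^ 2)
      = ∫ x, Real.exp (-(T/2) * x ^ 2) :=
    integral_add_right_eq_self (fun x : ℝ => Real.exp (-(T/2) * x ^ 2)) c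
  rw [htrans, integral_gaussian]
  have hsqrt : Real.sqrt (π / (T/2)) = A / s := by
    rw [show π / (T/2) = (2 * π) / T by field_simp,
      Real.sqrt_div (by positivity), ← hAdef, ← hsdef]
  rw [hsqrt]
  unfold stdPhi
  rw [← hAdef]
  have hexp : -((v / s) ^ 2) / 2 = -(v ^ 2) / (2 * T) := by
    rw [div_pow, hs, hTdef]
    have h1 : (1 : ℝ) + lam1 ^ 2 ≠ 0 := by positivity
    field_simp
  rw [hexp, ← hA]
  field_simp

lemma stdPhiCDF_le_one' (a t : ℝ) : ∫ v in Iic t, stdPhi (v + a) ≤ 1 := by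
  have h := setIntegral_le_integral (s := Iic t)
    (integrable_stdPhi.comp_add_right a)
    (ae_of_all _ fun v => stdPhi_nonneg _)
  calc ∫ v in Iic t, stdPhi (v + a) ≤ ∫ v, stdPhi (v + a) := h
    _ = ∫ v, stdPhi v := integral_add_right_eq_self stdPhi a
    _ = 1 := integral_stdPhi

theorem stmt0 (lam0 lam1 : ℝ) :
    ∫ x : ℝ, stdPhi x * stdPhiCDF (lam0 + lam1 * x) =
      stdPhiCDF (lam0 / Real.sqrt (1 + lam1 ^ 2)) := by
  set s : ℝ := Real.sqrt (1 + lam1 ^ 2) with hsdef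
  have hs0 : 0 < s := Real.sqrt_pos.2 (by positivity)
  have step1 : ∀ x, stdPhi x * stdPhiCDF (lam0 + lam1 * x)
      = ∫ v in Iic lam0, stdPhi x * stdPhi (v + lam1 * x) := by
    intro x
    rw [stdPhiCDF, setIntegral_Iic_comp_add stdPhi (lam0 + lam1 * x) (lam1 * x),
      add_sub_cancel_right]
    exact (MeasureTheory.integral_const_mul _ _).symm
  simp only [step1]
  have hcont : Continuous (Function.uncurry fun x v : ℝ => stdPhi x * stdPhi (v + lam1 * x)) := by
    apply Continuous.mul
    · exact continuous_stdPhi.comp continuous_fst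
    · exact continuous_stdPhi.comp (continuous_snd.add (continuous_const.mul continuous_fst))
  have hInt : Integrable (Function.uncurry fun x v : ℝ => stdPhi x * stdPhi (v + lam1 * x))
      (volume.prod (volume.restrict (Iic lam0))) := by
    rw [integrable_prod_iff hcont.aestronglyMeasurable]
    constructor
    · refine ae_of_all _ fun x => ?_
      simp only [Function.uncurry_apply_pair]
      exact ((integrable_stdPhi.comp_add_right (lam1 * x)).restrict).const_mul _
    · refine Integrable.mono' integrable_stdPhi
        (hcont.norm.aestronglyMeasurable.integral_prod_right') (ae_of_all _ fun x => ?_)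
      simp only [Function.uncurry_apply_pair]
      have h1 : ∀ v, ‖stdPhi x * stdPhi (v + lam1 * x)‖ = stdPhi x * stdPhi (v + lam1 * x) :=
        fun v => Real.norm_of_nonneg (mul_nonneg (stdPhi_nonneg _) (stdPhi_nonneg _))
      rw [Real.norm_of_nonneg (integral_nonneg fun v => norm_nonneg _)]
      simp only [h1]
      rw [MeasureTheory.integral_const_mul]
      calc stdPhi x * ∫ v in Iic lam0, stdPhi (v + lam1 * x)
          ≤ stdPhi x * 1 :=
            mul_le_mul_of_nonneg_left (stdPhiCDF_le_one' _ _) (stdPhi_nonneg x)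
        _ = stdPhi x := mul_one _
  rw [MeasureTheory.integral_integral_swap hInt]
  have step3 : ∀ v, (∫ x, stdPhi x * stdPhi (v + lam1 * x)) = s⁻¹ * stdPhi (v / s) :=
    fun v => inner_gauss lam1 v
  simp only [step3]
  rw [MeasureTheory.integral_const_mul,
    setIntegral_Iic_comp_div stdPhi lam0 s hs0, ← mul_assoc, inv_mul_cancel₀ hs0.ne', one_mul]
  rfl
end

section
/- In the Biswas–Hwang bivariate binomial construction with marginals X₁ ~ Bin(2,p₁), X₂ ~ Bin(2,p₂) and parameter α satisfying the validity condition, the correlation coefficient of X₁ and X₂ equals (α/(1+α))·√(p₁(1−p₁)/(p₂(1−p₂))). -/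
open Finset

/-- Bin(2,t) pmf. -/
noncomputable def bin2 (t : ℝ) (k : ℕ) : ℝ := (Nat.choose 2 k : ℝ) * t ^ k * (1 - t) ^ (2 - k)

/-- Biswas–Hwang conditional pmf of X₂ given X₁ = x₁. -/
noncomputable def bhCond (t1 t2 : ℝ) (x1 x2 : ℕ) : ℝ :=
  if x1 = 0 then bin2 t1 x2
  else if x1 = 1 then
    (if x2 = 0 then (1 - t1) * (1 - t2)
     else if x2 = 1 then (1 - t1) * t2 + t1 * (1 - t2)
     else if x2 = 2 then t1 * t2 else 0)
  else bin2 t2 x2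

/-- Joint pmf of the Biswas–Hwang bivariate binomial. -/
noncomputable def bhJoint (p1 t1 t2 : ℝ) (x1 x2 : ℕ) : ℝ := bin2 p1 x1 * bhCond t1 t2 x1 x2

/-- Correlation of the Biswas–Hwang bivariate binomial:
    Corr(X₁,X₂) = (α/(1+α))·√(p₁(1−p₁)/(p₂(1−p₂))). Marginal means are 2p₁, 2p₂ and
    variances 2p₁(1−p₁), 2p₂(1−p₂). -/
theorem stmt19 (p1 p2 α : ℝ) (hα : 0 ≤ α)
    (hp1 : 0 < p1) (hp1' : p1 < 1) (hp2 : 0 < p2) (hp2' : p2 < 1)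
    (hvalid1 : (α / (1 + α)) * p1 ≤ p2) (hvalid2 : p2 ≤ (α / (1 + α)) * p1 + 1 / (1 + α))
    (t1 t2 : ℝ) (ht1 : t1 = (p2 + α * (p2 - p1)) / (1 + α))
    (ht2 : t2 = t1 + α / (1 + α)) :
    ((∑ x1 ∈ ({0, 1, 2} : Finset ℕ), ∑ x2 ∈ ({0, 1, 2} : Finset ℕ),
          (x1 : ℝ) * (x2 : ℝ) * bhJoint p1 t1 t2 x1 x2) - (2 * p1) * (2 * p2)) /
        (Real.sqrt (2 * p1 * (1 - p1)) * Real.sqrt (2 * p2 * (1 - p2))) =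
      (α / (1 + α)) * Real.sqrt (p1 * (1 - p1) / (p2 * (1 - p2))) := by
  have hα1 : (0:ℝ) < 1 + α := by linarith
  have ha : (0:ℝ) < p1 * (1 - p1) := by nlinarith
  have hb : (0:ℝ) < p2 * (1 - p2) := by nlinarith
  have hsum : (∑ x1 ∈ ({0, 1, 2} : Finset ℕ), ∑ x2 ∈ ({0, 1, 2} : Finset ℕ),
          (x1 : ℝ) * (x2 : ℝ) * bhJoint p1 t1 t2 x1 x2) - (2 * p1) * (2 * p2)
        = (α / (1 + α)) * (2 * (p1 * (1 - p1))) := by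
    subst ht2 ht1
    simp only [bhJoint, bhCond, bin2]
    norm_num [Finset.sum_insert, Finset.mem_insert]
    field_simp
    ring
  rw [hsum]
  have key : ∀ x y : ℝ, 0 < x → 0 < y →
      (α / (1 + α) * (2 * x)) / (Real.sqrt (2 * x) * Real.sqrt (2 * y)) =
        α / (1 + α) * Real.sqrt (x / y) := by
    intro x y hx hy
    have h2 : Real.sqrt 2 * Real.sqrt 2 = 2 := Real.mul_self_sqrt (by norm_num)
    rw [Real.sqrt_div hx.le, Real.sqrt_mul (by norm_num : (0:ℝ) ≤ 2) x,
      Real.sqrt_mul (by norm_num : (0:ℝ) ≤ 2) y]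
    have e1 : Real.sqrt 2 * Real.sqrt x * (Real.sqrt 2 * Real.sqrt y)
        = 2 * Real.sqrt x * Real.sqrt y := by
      linear_combination Real.sqrt x * Real.sqrt y * h2
    rw [e1, show x = Real.sqrt x * Real.sqrt x from (Real.mul_self_sqrt hx.le).symm,
      Real.sqrt_mul_self (Real.sqrt_nonneg x)]
    have hsx : (0:ℝ) < Real.sqrt x := Real.sqrt_pos.mpr hx
    have hsy : (0:ℝ) < Real.sqrt y := Real.sqrt_pos.mpr hy
    field_simp
  rw [show 2 * p1 * (1 - p1) = 2 * (p1 * (1 - p1)) by ring,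
    show 2 * p2 * (1 - p2) = 2 * (p2 * (1 - p2)) by ring]
  exact key _ _ ha hb
end
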